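/- arXiv:2304.09055 — 3 statements merged into one kernel-verified Lean document; each statement's English description precedes it below -/
import Mathlib

section
/- Let ν ∈ [0, 1/4] and let v₁, …, v_l be nonzero vectors in ℝⁿ such that for all j ∈ {1, …, l−1}, ‖P_{span(v₁,…,v_j)} v_{j+1}‖₂ ≤ (ν/√l)·‖v_{j+1}‖₂, where P_F denotes the orthogonal projection onto the subspace F. Then (v₁, …, v_l) is a (2ν)-almost orthogonal system. Moreover, if V is the n×l matrix with columns v₁, …, v_l, then det(VᵀV)^{1/2} ≥ 2^{−l} · ∏_{j=1}^{l} ‖v_j‖₂. -/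
set_option maxHeartbeats 1000000

open MeasureTheory Matrix Finset RealInnerProductSpace

/-- `ν`-almost orthogonal system: all singular values of the matrix whose columns are
the normalized vectors lie in `[1-ν, 1+ν]`. -/
noncomputable def AlmostOrth {n l : ℕ} (ν : ℝ) (v : Fin l → EuclideanSpace ℝ (Fin n)) : Prop :=
  (∀ j, v j ≠ 0) ∧
  ∀ θ : EuclideanSpace ℝ (Fin l),
    (1 - ν) * ‖θ‖ ≤ ‖∑ j, θ j • (‖v j‖⁻¹ • v j)‖ ∧
    ‖∑ j, θ j • (‖v j‖⁻¹ • v j)‖ ≤ (1 + ν) * ‖θ‖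

private lemma norm_sum_sq_of_ortho' {m : ℕ} {E : Type*} [NormedAddCommGroup E]
    [InnerProductSpace ℝ E] (x : Fin m → E) (h : ∀ i j, i ≠ j → ⟪x i, x j⟫ = 0) :
    ‖∑ j, x j‖ ^ 2 = ∑ j, ‖x j‖ ^ 2 := by
  rw [← real_inner_self_eq_norm_sq, inner_sum]
  refine Finset.sum_congr rfl fun j _ => ?_
  rw [sum_inner, Finset.sum_eq_single j (fun i _ hij => h i j hij) (by simp),
    real_inner_self_eq_norm_sq]

private lemma euclid_norm_sq' {m : ℕ} (θ : EuclideanSpace ℝ (Fin m)) :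
    ‖θ‖ ^ 2 = ∑ j, θ j ^ 2 := by
  rw [EuclideanSpace.norm_eq, Real.sq_sqrt (by positivity)]
  simp [sq_abs]

private lemma sum_abs_le_sqrt_card' {m : ℕ} (θ : EuclideanSpace ℝ (Fin m)) :
    ∑ j, |θ j| ≤ Real.sqrt m * ‖θ‖ := by
  have h1 : (∑ j, |θ j|) ^ 2 ≤ (m : ℝ) * ∑ j, θ j ^ 2 := by
    simpa [sq_abs] using sq_sum_le_card_mul_sum_sq (s := univ) (f := fun j => |θ j|)
  have h0 : (0:ℝ) ≤ ∑ j, |θ j| := Finset.sum_nonneg fun j _ => abs_nonneg _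
  have h3 := Real.sqrt_le_sqrt h1
  rw [Real.sqrt_sq h0] at h3
  refine h3.trans ?_
  rw [← euclid_norm_sq' θ, Real.sqrt_mul (by positivity), Real.sqrt_sq (norm_nonneg _)]

/-- If each `v_{j+1}` has projection onto the span of the previous vectors
of norm at most `(ν/√l)·‖v_{j+1}‖`, then the system is `2ν`-almost orthogonal, and the Gram
determinant satisfies `det(VᵀV)^{1/2} ≥ 2^{-l} ∏ ‖v_j‖`. -/
theorem almost_orthogonal_criterion {n l : ℕ} (ν : ℝ) (hν : ν ∈ Set.Icc (0:ℝ) (1/4))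
    (v : Fin l → EuclideanSpace ℝ (Fin n)) (hv : ∀ j, v j ≠ 0)
    (hproj : ∀ j : Fin l,
      ‖(Submodule.orthogonalProjectionOnto (Submodule.span ℝ (v '' {i | i < j})) (v j) :
          EuclideanSpace ℝ (Fin n))‖ ≤ ν / Real.sqrt l * ‖v j‖) :
    AlmostOrth (2 * ν) v ∧
    2 ^ (-(l:ℤ)) * ∏ j, ‖v j‖ ≤
      Real.sqrt (Matrix.det (Matrix.of fun i j : Fin l => ⟪v i, v j⟫)) := by
  obtain ⟨hν0, hν4⟩ := hν
  haveI : WellFoundedLT (Fin l) := inferInstance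
  set g : Fin l → EuclideanSpace ℝ (Fin n) := InnerProductSpace.gramSchmidt ℝ v with hg
  have horth : ∀ j : Fin l, ∀ x ∈ Submodule.span ℝ (v '' {i | i < j}), ⟪g j, x⟫ = 0 := by
    intro j x hx
    induction hx using Submodule.span_induction with
    | mem x hx =>
      obtain ⟨i, hi, rfl⟩ := hx
      exact InnerProductSpace.gramSchmidt_inv_triangular ℝ v hi
    | zero => simp
    | add x y _ _ hx hy => rw [inner_add_right, hx, hy, add_zero]
    | smul c x _ hx => rw [real_inner_smul_right, hx, mul_zero]
  have hgo : ∀ i j : Fin l, i ≠ j → ⟪g i, g j⟫ = 0 := fun i j hij =>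
    InnerProductSpace.gramSchmidt_orthogonal ℝ v hij
  have hmem : ∀ j : Fin l, v j - g j ∈ Submodule.span ℝ (v '' {i | i < j}) := by
    intro j
    have hset : {i : Fin l | i < j} = Set.Iio j := rfl
    rw [hset, ← InnerProductSpace.span_gramSchmidt_Iio ℝ v j]
    have hd : v j - g j = ∑ i ∈ Finset.Iio j,
        (ℝ ∙ g i).starProjection (v j) := by
      rw [hg, InnerProductSpace.gramSchmidt_def ℝ v j, sub_sub_cancel]
    rw [hd]
    refine Submodule.sum_mem _ fun i hi => ?_
    have h1 : (ℝ ∙ g i) ≤ Submodule.span ℝ (g '' Set.Iio j) := by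
      rw [Submodule.span_singleton_le_iff_mem]
      exact Submodule.subset_span ⟨i, Finset.mem_Iio.mp hi, rfl⟩
    exact h1 (SetLike.coe_mem _)
  have hP : ∀ j : Fin l,
      (Submodule.orthogonalProjectionOnto (Submodule.span ℝ (v '' {i | i < j})) (v j) :
        EuclideanSpace ℝ (Fin n)) = v j - g j := by
    intro j
    refine Submodule.eq_starProjection_of_mem_of_inner_eq_zero (hmem j) fun w hw => ?_
    rw [sub_sub_cancel]
    exact horth j w hw
  have hp : ∀ j : Fin l, ‖v j - g j‖ ≤ ν / Real.sqrt l * ‖v j‖ := by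
    intro j; rw [← hP j]; exact hproj j
  have hpyth : ∀ j : Fin l, ‖g j‖ ^ 2 + ‖v j - g j‖ ^ 2 = ‖v j‖ ^ 2 := by
    intro j
    have hi : ⟪g j, v j - g j⟫ = 0 := horth j _ (hmem j)
    have h := norm_add_sq_real (g j) (v j - g j)
    rw [add_sub_cancel, hi] at h
    linarith
  have hl1 : ∀ _ : Fin l, (1:ℝ) ≤ l := fun j => by
    have := j.2; exact_mod_cast Nat.one_le_iff_ne_zero.mpr (by omega)
  have hp2 : ∀ j : Fin l, ‖v j - g j‖ ^ 2 ≤ ν ^ 2 / l * ‖v j‖ ^ 2 := by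
    intro j
    have hl := hl1 j
    have h2 := pow_le_pow_left₀ (norm_nonneg _) (hp j) 2
    calc ‖v j - g j‖ ^ 2 ≤ (ν / Real.sqrt l * ‖v j‖) ^ 2 := h2
      _ = ν ^ 2 / l * ‖v j‖ ^ 2 := by
          rw [mul_pow, div_pow, Real.sq_sqrt (by linarith : (0:ℝ) ≤ l)]
  have hgl : ∀ j : Fin l, (1 - ν) * ‖v j‖ ≤ ‖g j‖ ∧ ‖v j‖ / 2 ≤ ‖g j‖ ∧ ‖g j‖ ≤ ‖v j‖ := by
    intro j
    have hl := hl1 j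
    have hl0 : (0:ℝ) < l := by linarith
    have hν2 : ν ^ 2 ≤ ν := by nlinarith
    have hnu2 : ν ^ 2 / l ≤ ν := by
      have h1 : ν ^ 2 / l ≤ ν ^ 2 / 1 :=
        div_le_div_of_nonneg_left (by positivity) one_pos hl
      linarith
    have h1 := hp2 j
    have h2 := hpyth j
    have hgn : (0:ℝ) ≤ ‖g j‖ := norm_nonneg _
    have hvn : (0:ℝ) ≤ ‖v j‖ := norm_nonneg _
    have hfac : (0:ℝ) ≤ 2*ν - ν^2/l - ν^2 := by linarith
    refine ⟨?_, ?_, ?_⟩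
    · have hkey : ((1 - ν) * ‖v j‖) ^ 2 ≤ ‖g j‖ ^ 2 := by
        nlinarith [mul_nonneg hfac (sq_nonneg ‖v j‖)]
      exact (pow_le_pow_iff_left₀ (mul_nonneg (by linarith) hvn) hgn two_ne_zero).mp hkey
    · have h3 : ν ^ 2 / l ≤ 1/16 := by
        have h4 : ν ^ 2 ≤ 1/16 := by nlinarith
        have h5 : ν ^ 2 / l ≤ ν ^ 2 / 1 :=
          div_le_div_of_nonneg_left (by positivity) one_pos hl
        linarith
      have hkey : (‖v j‖ / 2) ^ 2 ≤ ‖g j‖ ^ 2 := by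
        nlinarith [mul_nonneg (by linarith : (0:ℝ) ≤ 1 - ν^2/l - 1/4) (sq_nonneg ‖v j‖)]
      exact (pow_le_pow_iff_left₀ (by positivity) hgn two_ne_zero).mp hkey
    · have hkey : ‖g j‖ ^ 2 ≤ ‖v j‖ ^ 2 := by nlinarith [sq_nonneg (‖v j - g j‖)]
      exact (pow_le_pow_iff_left₀ hgn hvn two_ne_zero).mp hkey
  have hgne : ∀ j : Fin l, g j ≠ 0 := by
    intro j hzero
    have h1 := (hgl j).2.1
    rw [hzero, norm_zero] at h1
    have h2 := norm_pos_iff.mpr (hv j)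
    linarith
  constructor
  · -- Part 1
    refine ⟨hv, fun θ => ?_⟩
    set c : Fin l → ℝ := fun j => θ j * ‖v j‖⁻¹ with hc
    have hsplit : ∑ j, θ j • (‖v j‖⁻¹ • v j)
        = (∑ j, c j • g j) + ∑ j, c j • (v j - g j) := by
      rw [← Finset.sum_add_distrib]
      refine Finset.sum_congr rfl fun j _ => ?_
      rw [smul_smul, ← smul_add, add_sub_cancel]
    set S := ∑ j, c j • g j with hS
    set T := ∑ j, c j • (v j - g j) with hT
    have hnv : ∀ j : Fin l, ‖v j‖⁻¹ * ‖v j‖ = 1 := fun j =>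
      inv_mul_cancel₀ (norm_ne_zero_iff.mpr (hv j))
    have hcv : ∀ j : Fin l, c j ^ 2 * ‖v j‖ ^ 2 = θ j ^ 2 := by
      intro j
      have h := hnv j
      calc c j ^ 2 * ‖v j‖ ^ 2 = θ j ^ 2 * (‖v j‖⁻¹ * ‖v j‖) ^ 2 := by rw [hc]; ring
        _ = θ j ^ 2 := by rw [h]; ring
    have hS2 : ‖S‖ ^ 2 = ∑ j, c j ^ 2 * ‖g j‖ ^ 2 := by
      rw [hS, norm_sum_sq_of_ortho' _ (fun i j hij => by
        rw [real_inner_smul_left, real_inner_smul_right, hgo i j hij]; ring)]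
      refine Finset.sum_congr rfl fun j _ => ?_
      rw [norm_smul, mul_pow, Real.norm_eq_abs, sq_abs]
    have hθ2 : ‖θ‖ ^ 2 = ∑ j, θ j ^ 2 := euclid_norm_sq' θ
    have hSle : ‖S‖ ≤ ‖θ‖ := by
      have h1 : ‖S‖ ^ 2 ≤ ‖θ‖ ^ 2 := by
        rw [hS2, hθ2]
        refine Finset.sum_le_sum fun j _ => ?_
        have h2 : c j ^ 2 * ‖g j‖ ^ 2 ≤ c j ^ 2 * ‖v j‖ ^ 2 :=
          mul_le_mul_of_nonneg_left
            (pow_le_pow_left₀ (norm_nonneg _) (hgl j).2.2 2) (sq_nonneg _)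
        rw [hcv j] at h2
        exact h2
      have h3 := Real.sqrt_le_sqrt h1
      rwa [Real.sqrt_sq (norm_nonneg _), Real.sqrt_sq (norm_nonneg _)] at h3
    have hSge : (1 - ν) * ‖θ‖ ≤ ‖S‖ := by
      have h1 : ((1 - ν) * ‖θ‖) ^ 2 ≤ ‖S‖ ^ 2 := by
        rw [hS2, mul_pow, hθ2, Finset.mul_sum]
        refine Finset.sum_le_sum fun j _ => ?_
        have h2 : ((1-ν) * ‖v j‖) ^ 2 ≤ ‖g j‖ ^ 2 :=
          pow_le_pow_left₀ (mul_nonneg (by linarith) (norm_nonneg _)) (hgl j).1 2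
        nlinarith [mul_le_mul_of_nonneg_left h2 (sq_nonneg (c j)), hcv j]
      have h3 := Real.sqrt_le_sqrt h1
      rwa [Real.sqrt_sq (mul_nonneg (by linarith) (norm_nonneg θ)), Real.sqrt_sq (norm_nonneg _)] at h3
    have hTle : ‖T‖ ≤ ν * ‖θ‖ := by
      have h1 : ‖T‖ ≤ ∑ j, |θ j| * (ν / Real.sqrt l) := by
        refine (norm_sum_le _ _).trans (Finset.sum_le_sum fun j _ => ?_)
        have hvn : (0:ℝ) < ‖v j‖ := norm_pos_iff.mpr (hv j)
        calc ‖c j • (v j - g j)‖ = |θ j| * (‖v j‖⁻¹ * ‖v j - g j‖) := by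
              rw [norm_smul, Real.norm_eq_abs, hc, abs_mul, abs_inv, abs_norm, mul_assoc]
          _ ≤ |θ j| * (ν / Real.sqrt l) := by
              refine mul_le_mul_of_nonneg_left ?_ (abs_nonneg _)
              rw [inv_mul_eq_div, div_le_iff₀ hvn]
              exact hp j
      rcases Nat.eq_zero_or_pos l with hl | hl
      · subst hl
        have : T = 0 := by rw [hT]; simp
        rw [this, norm_zero]
        positivity
      · have hsl : (0:ℝ) < Real.sqrt l := Real.sqrt_pos.mpr (by exact_mod_cast hl)
        have h2 : ∑ j, |θ j| * (ν / Real.sqrt l) = (ν / Real.sqrt l) * ∑ j, |θ j| := by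
          rw [Finset.mul_sum]
          exact Finset.sum_congr rfl fun j _ => by ring
        have h3 : (ν / Real.sqrt l) * ∑ j, |θ j| ≤ (ν / Real.sqrt l) * (Real.sqrt l * ‖θ‖) :=
          mul_le_mul_of_nonneg_left (sum_abs_le_sqrt_card' θ) (by positivity)
        have h4 : (ν / Real.sqrt l) * (Real.sqrt l * ‖θ‖) = ν * ‖θ‖ := by
          field_simp
        linarith
    rw [hsplit]
    have hadd := norm_add_le S T
    have hS' : ‖S‖ ≤ ‖S + T‖ + ‖T‖ := by
      have h := norm_add_le (S + T) (-T)
      simpa using h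
    constructor
    · have he : (1 - 2*ν) * ‖θ‖ = (1-ν) * ‖θ‖ - ν * ‖θ‖ := by ring
      linarith
    · have he : (1 + 2*ν) * ‖θ‖ = ‖θ‖ + 2 * (ν * ‖θ‖) := by ring
      have hν' : (0:ℝ) ≤ ν * ‖θ‖ := by positivity
      linarith
  · -- Part 2
    set A : Matrix (Fin l) (Fin l) ℝ := Matrix.of (fun i k => ⟪g k, v i⟫ / ‖g k‖ ^ 2) with hA
    have hgn2 : ∀ k : Fin l, ‖g k‖ ^ 2 ≠ 0 := fun k =>
      pow_ne_zero 2 (norm_ne_zero_iff.mpr (hgne k))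
    have hexp : ∀ i, v i = ∑ k, A i k • g k := by
      intro i
      have hdin : ∀ m, ⟪g m, v i - ∑ k, A i k • g k⟫ = 0 := by
        intro m
        rw [inner_sub_right, inner_sum,
          Finset.sum_eq_single m (fun k _ hkm => by
            rw [real_inner_smul_right, hgo m k (Ne.symm hkm), mul_zero]) (by simp),
          real_inner_smul_right, real_inner_self_eq_norm_sq, hA]
        simp only [Matrix.of_apply]
        rw [div_mul_cancel₀ _ (hgn2 m), sub_self]
      have hdmem : v i - ∑ k, A i k • g k ∈ Submodule.span ℝ (Set.range g) := by
        refine Submodule.sub_mem _ ?_ (Submodule.sum_mem _ fun k _ =>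
          Submodule.smul_mem _ _ (Submodule.subset_span ⟨k, rfl⟩))
        rw [hg, InnerProductSpace.span_gramSchmidt ℝ v]
        exact Submodule.subset_span ⟨i, rfl⟩
      have hz : ∀ u ∈ Submodule.span ℝ (Set.range g), ⟪u, v i - ∑ k, A i k • g k⟫ = 0 := by
        intro u hu
        induction hu using Submodule.span_induction with
        | mem x hx => obtain ⟨m, rfl⟩ := hx; exact hdin m
        | zero => simp
        | add x y _ _ hx hy => rw [inner_add_left, hx, hy, add_zero]
        | smul a x _ hx => rw [real_inner_smul_left, hx, mul_zero]
      have h0 := hz _ hdmem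
      rw [inner_self_eq_zero, sub_eq_zero] at h0
      exact h0
    have hGram : (Matrix.of fun i j : Fin l => ⟪v i, v j⟫)
        = A * Matrix.diagonal (fun k => ‖g k‖ ^ 2) * Aᵀ := by
      ext i j
      have hlhs : ⟪v i, v j⟫ = ∑ k, A i k * (‖g k‖ ^ 2 * A j k) := by
        conv_lhs => rw [hexp i, hexp j]
        rw [sum_inner]
        refine Finset.sum_congr rfl fun k _ => ?_
        rw [inner_sum, Finset.sum_eq_single k (fun m _ hmk => by
          rw [real_inner_smul_left, real_inner_smul_right, hgo k m (Ne.symm hmk)]; ring)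
          (by simp),
          real_inner_smul_left, real_inner_smul_right, real_inner_self_eq_norm_sq]
        ring
      show ⟪v i, v j⟫ = ((A * Matrix.diagonal fun k => ‖g k‖ ^ 2) * Aᵀ) i j
      rw [hlhs, Matrix.mul_apply]
      refine Finset.sum_congr rfl fun k _ => ?_
      rw [Matrix.mul_diagonal, Matrix.transpose_apply]
      ring
    have hAtri : A.BlockTriangular OrderDual.toDual := by
      intro i k h
      have hik : i < k := h
      rw [hA]
      simp only [Matrix.of_apply]
      rw [InnerProductSpace.gramSchmidt_inv_triangular ℝ v hik, zero_div]
    have hAdiag : ∀ i, A i i = 1 := by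
      intro i
      have h1 : ⟪g i, v i - g i⟫ = 0 := horth i _ (hmem i)
      rw [inner_sub_right, sub_eq_zero] at h1
      rw [hA]
      simp only [Matrix.of_apply]
      rw [h1, real_inner_self_eq_norm_sq, div_self (hgn2 i)]
    have hdetA : A.det = 1 := by
      rw [Matrix.det_of_lowerTriangular A hAtri]
      exact Finset.prod_eq_one fun i _ => hAdiag i
    have hdet : (Matrix.of fun i j : Fin l => ⟪v i, v j⟫).det = ∏ k, ‖g k‖ ^ 2 := by
      rw [hGram, Matrix.det_mul, Matrix.det_mul, Matrix.det_transpose, hdetA,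
        Matrix.det_diagonal, one_mul, mul_one]
    rw [hdet, Finset.prod_pow, Real.sqrt_sq (Finset.prod_nonneg fun k _ => norm_nonneg _)]
    have h2l : (2:ℝ) ^ (-(l:ℤ)) * ∏ j, ‖v j‖ = ∏ j, (‖v j‖ / 2) := by
      rw [Finset.prod_div_distrib, Finset.prod_const, Finset.card_univ, Fintype.card_fin,
        _root_.zpow_neg, zpow_natCast]
      rw [div_eq_mul_inv, mul_comm]
    rw [h2l]
    exact Finset.prod_le_prod (fun j _ => by positivity) (fun j _ => (hgl j).2.1)
end

section
/- Let s, α ∈ (0,1) and let L > 0. Let U be an n×l real matrix such that every unit vector in the image U·ℝˡ belongs to Incomp(s·n, α), i.e. U·ℝˡ ∩ S^{n−1} ⊂ Incomp(s·n, α). Then every θ ∈ ℝˡ with ‖Uθ‖₂ ≤ √(s·n)/2 satisfies dist(Uθ, ℤⁿ) ≥ L·√(log₊(α‖Uθ‖₂ / L)), where log₊(x) = max(log x, 0). -/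
open MeasureTheory Matrix Finset

noncomputable def e2norm {n : ℕ} (x : Fin n → ℝ) : ℝ := Real.sqrt (∑ i, x i ^ 2)

/-- Euclidean distance from a point to the integer lattice `ℤⁿ`. -/
noncomputable def latticeDist {n : ℕ} (x : Fin n → ℝ) : ℝ :=
  ⨅ z : Fin n → ℤ, e2norm (fun i => x i - (z i : ℝ))

noncomputable def logPlus (x : ℝ) : ℝ := max (Real.log x) 0

lemma e2norm_nonneg {n : ℕ} (x : Fin n → ℝ) : 0 ≤ e2norm x := Real.sqrt_nonneg _

lemma e2norm_smul {n : ℕ} (c : ℝ) (hc : 0 ≤ c) (x : Fin n → ℝ) :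
    e2norm (fun i => c * x i) = c * e2norm x := by
  unfold e2norm
  simp_rw [mul_pow, ← Finset.mul_sum]
  rw [Real.sqrt_mul (sq_nonneg c), Real.sqrt_sq hc]

lemma e2norm_triangle {n : ℕ} (x y : Fin n → ℝ) :
    e2norm (fun i => x i + y i) ≤ e2norm x + e2norm y := by
  have := norm_add_le ((WithLp.equiv 2 (Fin n → ℝ)).symm x) ((WithLp.equiv 2 (Fin n → ℝ)).symm y)
  have he : ∀ v : Fin n → ℝ, ‖(WithLp.equiv 2 (Fin n → ℝ)).symm v‖ = e2norm v := by
    intro v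
    rw [EuclideanSpace.norm_eq]
    unfold e2norm
    congr 1
    exact Finset.sum_congr rfl fun i _ => by simp [Real.norm_eq_abs, sq_abs]
  have key : e2norm (fun i => x i + y i)
      = ‖(WithLp.equiv 2 (Fin n → ℝ)).symm x + (WithLp.equiv 2 (Fin n → ℝ)).symm y‖ := by
    rw [← he (fun i => x i + y i)]
    rfl
  rw [he, he] at this
  rw [key]
  exact this

lemma elem_ineq (L t : ℝ) (hL : 0 < L) (ht : 0 ≤ t) :
    L * Real.sqrt (logPlus (t / L)) ≤ t := by
  by_cases h : t / L ≤ 1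
  · have h0 : logPlus (t / L) = 0 := by
      unfold logPlus
      rw [max_eq_right (Real.log_nonpos (div_nonneg ht hL.le) h)]
    rw [h0, Real.sqrt_zero, mul_zero]; exact ht
  · push_neg at h
    have hlog : Real.log (t / L) ≤ (t / L) ^ 2 := by
      have h1 : Real.log (t / L) ≤ t / L - 1 := Real.log_le_sub_one_of_pos (by linarith)
      nlinarith
    have hs : Real.sqrt (logPlus (t / L)) ≤ t / L := by
      rw [show logPlus (t / L) = Real.log (t / L) from max_eq_left (Real.log_nonneg h.le)]
      calc Real.sqrt (Real.log (t / L)) ≤ Real.sqrt ((t / L) ^ 2) := Real.sqrt_le_sqrt hlog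
        _ = t / L := Real.sqrt_sq (by linarith)
    calc L * Real.sqrt (logPlus (t / L)) ≤ L * (t / L) :=
          mul_le_mul_of_nonneg_left hs hL.le
      _ = t := by field_simp

/-- Vectors with at most `s` nonzero coordinates. -/
def sparseSet (n : ℕ) (s : ℝ) : Set (Fin n → ℝ) :=
  {x | ((Finset.univ.filter fun i => x i ≠ 0).card : ℝ) ≤ s}

/-- Compressible unit vectors: unit vectors within Euclidean distance `τ`
of the set of `s`-sparse vectors. -/
noncomputable def compSet (n : ℕ) (s τ : ℝ) : Set (Fin n → ℝ) :=
  {x | e2norm x = 1 ∧ sInf {d | ∃ y ∈ sparseSet n s, d = e2norm (x - y)} ≤ τ}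

/-- Incompressible unit vectors. -/
noncomputable def incompSet (n : ℕ) (s τ : ℝ) : Set (Fin n → ℝ) :=
  {x | e2norm x = 1} \ compSet n s τ

/-- If every unit vector in the image of `U` is `(sn, α)`-incompressible,
then every `θ` with `‖Uθ‖₂ ≤ √(sn)/2` satisfies
`dist(Uθ, ℤⁿ) ≥ L·√(log₊(α‖Uθ‖₂/L))`. -/
theorem lcd_of_incompressible_image {n l : ℕ} (s α L : ℝ)
    (hs : s ∈ Set.Ioo (0:ℝ) 1) (hα : α ∈ Set.Ioo (0:ℝ) 1) (hL : 0 < L)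
    (U : Matrix (Fin n) (Fin l) ℝ)
    (hU : ∀ θ : Fin l → ℝ, e2norm (U.mulVec θ) = 1 →
      U.mulVec θ ∈ incompSet n (s * n) α) :
    ∀ θ : Fin l → ℝ, e2norm (U.mulVec θ) ≤ Real.sqrt (s * n) / 2 →
      L * Real.sqrt (logPlus (α * e2norm (U.mulVec θ) / L)) ≤ latticeDist (U.mulVec θ) := by
  intro θ hθ
  set x := U.mulVec θ with hxdef
  have hkey : α * e2norm x ≤ latticeDist x := by
    rcases eq_or_lt_of_le (e2norm_nonneg x) with h0 | hpos
    · rw [← h0, mul_zero]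
      exact le_ciInf fun z => e2norm_nonneg _
    · apply le_ciInf
      intro z
      by_contra hlt
      push_neg at hlt
      set c := e2norm x with hc
      have hα1 : α < 1 := hα.2
      have hα0 : 0 < α := hα.1
      -- e2norm of x - z is small, hence z is sparse
      have hxz : e2norm (fun i => x i - z i) < c := by
        calc e2norm (fun i => x i - z i) < α * c := hlt
          _ ≤ 1 * c := by nlinarith
          _ = c := one_mul c
      have hz_norm : e2norm (fun i => (z i : ℝ)) < 2 * c := by
        have htri := e2norm_triangle x (fun i => z i - x i)
        have h1 : e2norm (fun i => x i + (z i - x i)) = e2norm (fun i => (z i : ℝ)) := by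
          congr 1; funext i; ring
        have h2 : e2norm (fun i => z i - x i) = e2norm (fun i => x i - z i) := by
          unfold e2norm
          apply congrArg
          apply Finset.sum_congr rfl
          intro i _; ring
        rw [h1, h2] at htri
        linarith
      have hcsqrt : c ≤ Real.sqrt (s * n) / 2 := hθ
      have hsn0 : (0:ℝ) ≤ s * n := by
        have := hs.1
        positivity
      have hzsum : (∑ i, ((z i : ℝ)) ^ 2) < s * n := by
        have h2c : e2norm (fun i => (z i : ℝ)) < Real.sqrt (s * n) := by
          calc e2norm (fun i => (z i : ℝ)) < 2 * c := hz_norm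
            _ ≤ 2 * (Real.sqrt (s * n) / 2) := by linarith
            _ = Real.sqrt (s * n) := by ring
        have hnn : (0:ℝ) ≤ ∑ i, ((z i : ℝ)) ^ 2 := Finset.sum_nonneg fun i _ => sq_nonneg _
        have hsq : (e2norm (fun i => (z i : ℝ))) ^ 2 = ∑ i, ((z i : ℝ)) ^ 2 :=
          Real.sq_sqrt hnn
        have hsq2 : (Real.sqrt (s * n)) ^ 2 = s * n := Real.sq_sqrt hsn0
        nlinarith [e2norm_nonneg (fun i => ((z i : ℝ)))]
      -- the normalized sparse approximant
      have hcinv : (0:ℝ) < c⁻¹ := inv_pos.mpr hpos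
      set y₀ : Fin n → ℝ := fun i => c⁻¹ * (z i : ℝ) with hy₀
      have hy₀sparse : y₀ ∈ sparseSet n (s * n) := by
        show ((Finset.univ.filter fun i => y₀ i ≠ 0).card : ℝ) ≤ s * n
        have hsub : ((Finset.univ.filter fun i => y₀ i ≠ 0).card : ℝ)
            ≤ ∑ i, ((z i : ℝ)) ^ 2 := by
          rw [Finset.card_eq_sum_ones, Nat.cast_sum]
          calc (∑ i ∈ Finset.univ.filter fun i => y₀ i ≠ 0, ((1:ℕ):ℝ))
              ≤ ∑ i ∈ Finset.univ.filter fun i => y₀ i ≠ 0, ((z i : ℝ)) ^ 2 := by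
                apply Finset.sum_le_sum
                intro i hi
                simp only [Finset.mem_filter] at hi
                have hz0 : z i ≠ 0 := by
                  intro h
                  apply hi.2
                  simp [hy₀, h]
                have : 1 ≤ (z i) ^ 2 := by
                  nlinarith [Int.one_le_abs hz0, sq_abs (z i), abs_nonneg (z i)]
                have : (1:ℝ) ≤ ((z i)^2 : ℤ) := by exact_mod_cast this
                push_cast at this ⊢
                linarith
            _ ≤ ∑ i, ((z i : ℝ)) ^ 2 := by
                apply Finset.sum_le_sum_of_subset_of_nonneg (Finset.filter_subset _ _)
                intro i _ _; exact sq_nonneg _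
        linarith
      -- apply incompressibility to the normalized vector
      have hmul : U.mulVec (c⁻¹ • θ) = fun i => c⁻¹ * x i := by
        rw [Matrix.mulVec_smul, ← hxdef]
        rfl
      have hunit : e2norm (U.mulVec (c⁻¹ • θ)) = 1 := by
        rw [hmul, e2norm_smul c⁻¹ hcinv.le, ← hc, inv_mul_cancel₀ hpos.ne']
      have hincomp := hU (c⁻¹ • θ) hunit
      rw [incompSet] at hincomp
      have hnotcomp := hincomp.2
      rw [compSet] at hnotcomp
      simp only [Set.mem_setOf_eq, not_and] at hnotcomp
      have hgt : α < sInf {d | ∃ y ∈ sparseSet n (s * n),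
          d = e2norm (U.mulVec (c⁻¹ • θ) - y)} := by
        have := hnotcomp hunit
        push_neg at this
        exact this
      have hmem : e2norm (U.mulVec (c⁻¹ • θ) - y₀)
          ∈ {d | ∃ y ∈ sparseSet n (s * n), d = e2norm (U.mulVec (c⁻¹ • θ) - y)} :=
        ⟨y₀, hy₀sparse, rfl⟩
      have hbdd : BddBelow {d | ∃ y ∈ sparseSet n (s * n),
          d = e2norm (U.mulVec (c⁻¹ • θ) - y)} := by
        refine ⟨0, ?_⟩
        rintro d ⟨y, _, rfl⟩
        exact e2norm_nonneg _
      have hle := csInf_le hbdd hmem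
      have hval : e2norm (U.mulVec (c⁻¹ • θ) - y₀) = c⁻¹ * e2norm (fun i => x i - z i) := by
        have heq : U.mulVec (c⁻¹ • θ) - y₀ = fun i => c⁻¹ * (x i - z i) := by
          rw [hmul]
          funext i
          simp only [Pi.sub_apply, hy₀]
          ring
        rw [heq, e2norm_smul c⁻¹ hcinv.le]
      rw [hval] at hle
      have : α < c⁻¹ * e2norm (fun i => x i - z i) := lt_of_lt_of_le hgt hle
      have hfinal : α * c < e2norm (fun i => x i - z i) := by
        have h1 : α * c < (c⁻¹ * e2norm (fun i => x i - z i)) * c := by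
          exact mul_lt_mul_of_pos_right this hpos
        have h2 : (c⁻¹ * e2norm (fun i => x i - z i)) * c = e2norm (fun i => x i - z i) := by
          field_simp
        linarith [h1, h2.symm.le]
      linarith
  have ht : 0 ≤ α * e2norm x := mul_nonneg hα.1.le (e2norm_nonneg x)
  calc L * Real.sqrt (logPlus (α * e2norm x / L)) ≤ α * e2norm x :=
        elem_ineq L (α * e2norm x) hL ht
    _ ≤ latticeDist x := hkey
end

section
/- There exists an absolute constant C > 0 such that for any n ∈ ℕ and any R > 0, the number of integer points in the Euclidean ball of radius R centered at the origin satisfies |ℤⁿ ∩ B(0,R)| ≤ (2 + C·R/√n)ⁿ. -/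
open Finset

lemma exp_quarter_le : Real.exp (1/4) ≤ 1.3 := by
  have h4 : Real.exp (1/4) ^ 4 = Real.exp 1 := by
    rw [← Real.exp_nat_mul]; norm_num
  have he : Real.exp 1 ≤ (1.3:ℝ)^4 := by
    have := Real.exp_one_lt_d9
    nlinarith
  rw [← pow_le_pow_iff_left₀ (Real.exp_nonneg _) (by norm_num : (0:ℝ) ≤ 1.3) (by norm_num : (4:ℕ) ≠ 0)]
  rw [h4]; exact he

lemma key (t : ℝ) (ht : 0 < t) : ∃ s : ℝ, 0 < s ∧
    Real.exp (s^2 * t^2) * (1 + 2 * (Real.exp (1/4) * (Real.exp (-s) * (1 - Real.exp (-s))⁻¹))) ≤ 2 + 32 * t := by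
  have hq := exp_quarter_le
  have hqpos := Real.exp_pos (1/4 : ℝ)
  rcases le_or_gt t (1/16) with hsm | hlg
  · -- small case, s = -log t
    have hlt1 : t < 1 := by linarith
    have h0 : 0 ≤ -Real.log t := by
      have : Real.log t < 0 := Real.log_neg ht hlt1
      linarith
    refine ⟨-Real.log t, ?_, ?_⟩
    · have hne : Real.log t ≠ 0 := by
        have : Real.log t < 0 := Real.log_neg ht hlt1
        linarith
      cases' lt_or_eq_of_le h0 with h h
      · exact h
      · exact absurd h.symm (by simpa using hne)
    · have hexp : Real.exp (-(-Real.log t)) = t := by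
        rw [neg_neg, Real.exp_log ht]
      rw [hexp]
      have hspos : 0 < Real.sqrt t := Real.sqrt_pos.mpr ht
      have h5 : (Real.sqrt t)⁻¹ * t = Real.sqrt t := by
        rw [← Real.mul_self_sqrt ht.le]; field_simp; rw [Real.sqrt_sq hspos.le]
      have hst : -Real.log t * t ≤ 2 * Real.sqrt t := by
        have h1 : -Real.log t = 2 * Real.log (Real.sqrt t)⁻¹ := by
          rw [Real.log_inv, Real.log_sqrt ht.le]; ring
        have h2 : Real.log (Real.sqrt t)⁻¹ ≤ (Real.sqrt t)⁻¹ - 1 :=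
          Real.log_le_sub_one_of_pos (by positivity)
        have hmul := mul_le_mul_of_nonneg_right h2 ht.le
        nlinarith [h1, hmul, h5, ht]
      have hsq : (-Real.log t)^2 * t^2 ≤ 4 * t := by
        have hs2 := mul_self_le_mul_self (mul_nonneg h0 ht.le) hst
        nlinarith [Real.sq_sqrt ht.le, hs2]
      have hA : Real.exp ((-Real.log t)^2 * t^2) ≤ 1.3 := by
        calc Real.exp ((-Real.log t)^2 * t^2) ≤ Real.exp (1/4) := by
              apply Real.exp_le_exp.mpr; nlinarith
          _ ≤ 1.3 := hq
      have hpos : (0:ℝ) < 1 - t := by linarith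
      have hgeo : t * (1 - t)⁻¹ ≤ 1/15 := by
        rw [mul_inv_le_iff₀ hpos]; linarith
      have hx0 : 0 ≤ t * (1 - t)⁻¹ := by positivity
      have h6 : Real.exp (1/4) * (t * (1-t)⁻¹) ≤ 1.3 * (1/15) :=
        mul_le_mul hq hgeo hx0 (by norm_num)
      have hApos := Real.exp_pos ((-Real.log t)^2 * t^2)
      have h7 : Real.exp ((-Real.log t)^2 * t^2) * (1 + 2 * (Real.exp (1/4) * (t * (1-t)⁻¹)))
          ≤ 1.3 * (1 + 2 * (1.3 * (1/15))) := by
        apply mul_le_mul hA _ _ (by norm_num)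
        · linarith
        · positivity
      calc Real.exp ((-Real.log t)^2 * t^2) * (1 + 2 * (Real.exp (1/4) * (t * (1-t)⁻¹)))
          ≤ 1.3 * (1 + 2 * (1.3 * (1/15))) := h7
        _ ≤ 2 + 32 * t := by nlinarith
  · -- large case, s = 1/t
    refine ⟨1/t, by positivity, ?_⟩
    have hs : (1/t)^2 * t^2 = 1 := by field_simp
    rw [hs]
    have h1 : Real.exp (-(1/t)) < 1 := by
      rw [Real.exp_lt_one_iff]
      simp only [neg_neg, Left.neg_neg_iff]
      positivity
    have h2 : (0:ℝ) < 1 - Real.exp (-(1/t)) := by linarith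
    have hr : Real.exp (-(1/t)) * (1 - Real.exp (-(1/t)))⁻¹ ≤ t := by
      rw [mul_inv_le_iff₀ h2]
      have h := Real.add_one_le_exp (1/t)
      have hprod : Real.exp (1/t) * Real.exp (-(1/t)) = 1 := by
        rw [← Real.exp_add]; ring_nf; exact Real.exp_zero
      have h1t : (1/t) * t = 1 := by field_simp
      nlinarith [mul_le_mul_of_nonneg_right h
        (mul_pos ht (Real.exp_pos (-(1/t)))).le, hprod, h1t]
    have hr0 : 0 ≤ Real.exp (-(1/t)) * (1 - Real.exp (-(1/t)))⁻¹ := by positivity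
    have h6 : Real.exp (1/4) * (Real.exp (-(1/t)) * (1 - Real.exp (-(1/t)))⁻¹) ≤ 1.3 * t :=
      mul_le_mul hq hr hr0 (by norm_num)
    have h7 : Real.exp 1 * (1 + 2 * (Real.exp (1/4) * (Real.exp (-(1/t)) * (1 - Real.exp (-(1/t)))⁻¹)))
        ≤ 2.7182818286 * (1 + 2 * (1.3 * t)) := by
      apply mul_le_mul Real.exp_one_lt_d9.le _ _ (by norm_num)
      · linarith
      · positivity
    calc Real.exp 1 * (1 + 2 * (Real.exp (1/4) * (Real.exp (-(1/t)) * (1 - Real.exp (-(1/t)))⁻¹)))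
        ≤ 2.7182818286 * (1 + 2 * (1.3 * t)) := h7
      _ ≤ 2 + 32 * t := by nlinarith


lemma geo (r : ℝ) (h0 : 0 ≤ r) (h1 : r < 1) (N : ℕ) :
    ∑ k ∈ Finset.Icc 1 N, r ^ k ≤ r * (1 - r)⁻¹ := by
  have hpos : 0 < 1 - r := by linarith
  have hne' : (1:ℝ) - r ≠ 0 := by linarith
  have hins : Finset.range (N+1) = insert 0 (Finset.Icc 1 N) := by
    ext x; simp [Finset.mem_range, Finset.mem_Icc]; omega
  have h0n : (0:ℕ) ∉ Finset.Icc 1 N := by simp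
  have hsum : 1 + ∑ k ∈ Finset.Icc 1 N, r ^ k = ∑ k ∈ Finset.range (N+1), r^k := by
    rw [hins, Finset.sum_insert h0n, pow_zero]
  have hg : ∑ k ∈ Finset.range (N+1), r^k = (1 - r^(N+1))/(1-r) := by
    rw [geom_sum_eq (by intro h; rw [h] at h1; linarith : r ≠ 1),
      ← neg_sub (1:ℝ) r, ← neg_sub (1:ℝ) (r^(N+1)), neg_div_neg_eq]
  have hp : 0 ≤ r^(N+1) := pow_nonneg h0 _
  have h3 : ∑ k ∈ Finset.Icc 1 N, r ^ k = (1 - r^(N+1))/(1-r) - 1 := by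
    rw [← hg]; linarith
  rw [h3, ← div_eq_mul_inv, div_sub_one hne']
  gcongr <;> linarith

lemma theta_half (s : ℝ) (hs : 0 < s) (M : ℤ) :
    ∑ k ∈ Finset.Icc (1:ℤ) M, Real.exp (-(s^2 * (k:ℝ)^2))
      ≤ Real.exp (1/4) * (Real.exp (-s) * (1 - Real.exp (-s))⁻¹) := by
  set r := Real.exp (-s) with hr
  have hr0 : 0 ≤ r := Real.exp_nonneg _
  have hr1 : r < 1 := by rw [hr, Real.exp_lt_one_iff]; linarith
  have step1 : ∑ k ∈ Finset.Icc (1:ℤ) M, Real.exp (-(s^2 * (k:ℝ)^2))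
      ≤ ∑ k ∈ Finset.Icc (1:ℤ) M, Real.exp (1/4) * r ^ k.toNat := by
    apply Finset.sum_le_sum
    intro k hk
    rw [Finset.mem_Icc] at hk
    have hk0 : (0:ℤ) ≤ k := by linarith [hk.1]
    have hkr : (1:ℝ) ≤ (k:ℝ) := by exact_mod_cast hk.1
    have hcast : ((k.toNat : ℕ) : ℝ) = (k:ℝ) := by
      exact_mod_cast congrArg (Int.cast : ℤ → ℝ) (Int.toNat_of_nonneg hk0)
    rw [hr, ← Real.exp_nat_mul, ← Real.exp_add]
    apply Real.exp_le_exp.mpr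
    rw [hcast]
    nlinarith [sq_nonneg (s*(k:ℝ) - 1/2)]
  have step2 : ∑ k ∈ Finset.Icc (1:ℤ) M, r ^ k.toNat
      = ∑ k ∈ Finset.Icc (1:ℕ) M.toNat, r ^ k := by
    refine Finset.sum_nbij' (fun k => k.toNat) (fun k => (k:ℤ)) ?_ ?_ ?_ ?_ ?_
    · intro a ha; rw [Finset.mem_Icc] at *; omega
    · intro a ha; rw [Finset.mem_Icc] at *; omega
    · intro a ha; rw [Finset.mem_Icc] at ha; omega
    · intro a ha; rw [Finset.mem_Icc] at ha; omega
    · intro a ha; rfl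
  calc ∑ k ∈ Finset.Icc (1:ℤ) M, Real.exp (-(s^2 * (k:ℝ)^2))
      ≤ ∑ k ∈ Finset.Icc (1:ℤ) M, Real.exp (1/4) * r ^ k.toNat := step1
    _ = Real.exp (1/4) * ∑ k ∈ Finset.Icc (1:ℕ) M.toNat, r ^ k := by
        rw [← Finset.mul_sum, step2]
    _ ≤ Real.exp (1/4) * (r * (1 - r)⁻¹) := by
        apply mul_le_mul_of_nonneg_left (geo r hr0 hr1 M.toNat) (Real.exp_nonneg _)

lemma theta_split (s : ℝ) (M : ℤ) (hM : 1 ≤ M) :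
    ∑ k ∈ Finset.Icc (-M) M, Real.exp (-(s^2 * (k:ℝ)^2))
      = 1 + 2 * ∑ k ∈ Finset.Icc (1:ℤ) M, Real.exp (-(s^2 * (k:ℝ)^2)) := by
  have hunion : Finset.Icc (-M) M = Finset.Icc (-M) (-1) ∪ Finset.Icc 0 M := by
    ext x; simp only [Finset.mem_Icc, Finset.mem_union]; omega
  have hdisj : Disjoint (Finset.Icc (-M) (-1)) (Finset.Icc (0:ℤ) M) := by
    rw [Finset.disjoint_left]
    intro a ha hb
    rw [Finset.mem_Icc] at ha hb
    omega
  have hneg : ∑ k ∈ Finset.Icc (-M) (-1), Real.exp (-(s^2 * (k:ℝ)^2))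
      = ∑ k ∈ Finset.Icc (1:ℤ) M, Real.exp (-(s^2 * (k:ℝ)^2)) := by
    refine Finset.sum_nbij' (fun k => -k) (fun k => -k) ?_ ?_ ?_ ?_ ?_
    · intro a ha; rw [Finset.mem_Icc] at *; omega
    · intro a ha; rw [Finset.mem_Icc] at *; omega
    · intro a _; omega
    · intro a _; omega
    · intro a _; push_cast; ring_nf
  have hins : Finset.Icc (0:ℤ) M = insert 0 (Finset.Icc 1 M) := by
    ext x; simp only [Finset.mem_Icc, Finset.mem_insert]; omega
  have h0 : (0:ℤ) ∉ Finset.Icc (1:ℤ) M := by simp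
  rw [hunion, Finset.sum_union hdisj, hneg, hins, Finset.sum_insert h0]
  norm_num
  ring

/-- The number of integer points in the Euclidean ball of radius `R`
centered at the origin in `ℝⁿ` is at most `(2 + CR/√n)ⁿ`. -/
theorem integer_points_in_ball :
    ∃ C > (0:ℝ), ∀ (n : ℕ) (R : ℝ), 0 < R →
      (Nat.card {z : Fin n → ℤ | e2norm (fun i => (z i : ℝ)) ≤ R} : ℝ) ≤
        (2 + C * R / Real.sqrt n) ^ n := by
  classical
  refine ⟨32, by norm_num, ?_⟩
  intro n R hR
  rcases Nat.eq_zero_or_pos n with hn | hn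
  · subst hn
    have h1 : {z : Fin 0 → ℤ | e2norm (fun i => (z i : ℝ)) ≤ R} = Set.univ := by
      ext z
      simp [e2norm, hR.le]
    rw [h1, pow_zero]
    simp [Nat.card_eq_fintype_card]
  · -- main case
    set t := R / Real.sqrt n with htdef
    have hn0 : (0:ℝ) < (n:ℝ) := by exact_mod_cast hn
    have hsn : 0 < Real.sqrt n := Real.sqrt_pos.mpr hn0
    have ht : 0 < t := div_pos hR hsn
    obtain ⟨s, hs, hkey⟩ := key t ht
    set M : ℤ := ⌈R⌉ with hMdef
    have hM1 : 1 ≤ M := Int.ceil_pos.mpr hR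
    have hMR : R ≤ (M:ℝ) := Int.le_ceil R
    set S := {z : Fin n → ℤ | e2norm (fun i => (z i : ℝ)) ≤ R} with hSdef
    set B : Finset (Fin n → ℤ) := Fintype.piFinset (fun _ => Finset.Icc (-M) M) with hBdef
    -- basic facts about members of S
    have hSQ : ∀ z ∈ S, ∑ i, ((z i : ℝ))^2 ≤ R^2 := by
      intro z hz
      have hz' : Real.sqrt (∑ i, ((z i : ℝ))^2) ≤ R := hz
      have hQ0 : 0 ≤ ∑ i, ((z i : ℝ))^2 := Finset.sum_nonneg fun i _ => sq_nonneg _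
      calc ∑ i, ((z i : ℝ))^2 = Real.sqrt (∑ i, ((z i : ℝ))^2) ^ 2 := (Real.sq_sqrt hQ0).symm
        _ ≤ R^2 := pow_le_pow_left₀ (Real.sqrt_nonneg _) hz' 2
    have hsub : S ⊆ ↑B := by
      intro z hz
      have hQ := hSQ z hz
      rw [Finset.mem_coe, hBdef, Fintype.mem_piFinset]
      intro i
      rw [Finset.mem_Icc]
      have h1 : ((z i : ℝ))^2 ≤ R^2 := by
        refine le_trans ?_ hQ
        exact Finset.single_le_sum (fun j _ => sq_nonneg ((z j : ℝ))) (Finset.mem_univ i)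
      have h2 : ((z i : ℝ))^2 ≤ ((M:ℝ))^2 := by nlinarith
      have hM0 : (0:ℝ) < (M:ℝ) := by exact_mod_cast hM1
      constructor
      · have : -(M:ℝ) ≤ (z i : ℝ) := by nlinarith
        exact_mod_cast this
      · have : (z i : ℝ) ≤ (M:ℝ) := by nlinarith
        exact_mod_cast this
    have hfin : S.Finite := Set.Finite.subset B.finite_toSet hsub
    set T := hfin.toFinset with hTdef
    have hTmem : ∀ z, z ∈ T ↔ z ∈ S := fun z => Set.Finite.mem_toFinset hfin
    have hTB : T ⊆ B := fun z hz => hsub ((hTmem z).mp hz)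
    have hcard : (Nat.card S : ℝ) = (T.card : ℝ) := by
      rw [Nat.card_coe_set_eq, Set.ncard_eq_toFinset_card _ hfin]
    set θ : ℝ := ∑ k ∈ Finset.Icc (-M) M, Real.exp (-(s^2 * (k:ℝ)^2)) with hθdef
    have hθ0 : 0 ≤ θ := Finset.sum_nonneg fun k _ => (Real.exp_pos _).le
    -- main counting estimate
    have hcount : (T.card : ℝ) ≤ Real.exp (s^2 * R^2) * θ^n := by
      have step1 : (T.card : ℝ) = ∑ _z ∈ T, (1:ℝ) := by
        rw [Finset.sum_const, nsmul_eq_mul, mul_one]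
      have step2 : ∀ z ∈ T, (1:ℝ) ≤ Real.exp (s^2 * R^2) * ∏ i, Real.exp (-(s^2 * ((z i : ℝ))^2)) := by
        intro z hz
        have hQ := hSQ z ((hTmem z).mp hz)
        have hprod : ∏ i, Real.exp (-(s^2 * ((z i : ℝ))^2))
            = Real.exp (∑ i, -(s^2 * ((z i : ℝ))^2)) := (Real.exp_sum _ _).symm
        rw [hprod, ← Real.exp_add]
        rw [show (1:ℝ) = Real.exp 0 from Real.exp_zero.symm]
        apply Real.exp_le_exp.mpr
        have : ∑ i, -(s^2 * ((z i : ℝ))^2) = -(s^2 * ∑ i, ((z i : ℝ))^2) := by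
          rw [Finset.mul_sum]
          exact Finset.sum_neg_distrib (f := fun i => s^2 * ((z i : ℝ))^2)
        rw [this]
        nlinarith [sq_nonneg s]
      calc (T.card : ℝ) = ∑ _z ∈ T, (1:ℝ) := step1
        _ ≤ ∑ z ∈ T, Real.exp (s^2 * R^2) * ∏ i, Real.exp (-(s^2 * ((z i : ℝ))^2)) :=
            Finset.sum_le_sum step2
        _ ≤ ∑ z ∈ B, Real.exp (s^2 * R^2) * ∏ i, Real.exp (-(s^2 * ((z i : ℝ))^2)) := by
            apply Finset.sum_le_sum_of_subset_of_nonneg hTB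
            intro z _ _
            positivity
        _ = Real.exp (s^2 * R^2) * ∑ z ∈ B, ∏ i, Real.exp (-(s^2 * ((z i : ℝ))^2)) := by
            rw [Finset.mul_sum]
        _ = Real.exp (s^2 * R^2) * θ^n := by
            congr 1
            rw [hBdef, ← Finset.prod_univ_sum (fun _ => Finset.Icc (-M) M)
              (fun _ k => Real.exp (-(s^2 * (k:ℝ)^2)))]
            rw [hθdef, Finset.prod_const, Finset.card_univ, Fintype.card_fin]
    have hθbar : θ ≤ 1 + 2 * (Real.exp (1/4) * (Real.exp (-s) * (1 - Real.exp (-s))⁻¹)) := by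
      rw [hθdef, theta_split s M hM1]
      have := theta_half s hs M
      linarith
    have hRt : R = t * Real.sqrt n := by
      rw [htdef]; field_simp
    have hR2 : s^2 * R^2 = (n:ℝ) * (s^2 * t^2) := by
      rw [hRt, mul_pow, Real.sq_sqrt hn0.le]; ring
    have hexp : Real.exp (s^2 * R^2) = Real.exp (s^2 * t^2) ^ n := by
      rw [hR2, Real.exp_nat_mul]
    calc ((Nat.card ↥S : ℕ) : ℝ) = (T.card : ℝ) := hcard
      _ ≤ Real.exp (s^2 * R^2) * θ^n := hcount
      _ = (Real.exp (s^2 * t^2) * θ)^n := by rw [hexp, ← mul_pow]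
      _ ≤ (2 + 32 * t)^n := by
          apply pow_le_pow_left₀ (mul_nonneg (Real.exp_nonneg _) hθ0)
          calc Real.exp (s^2 * t^2) * θ
              ≤ Real.exp (s^2 * t^2) * (1 + 2 * (Real.exp (1/4) * (Real.exp (-s) * (1 - Real.exp (-s))⁻¹))) :=
                mul_le_mul_of_nonneg_left hθbar (Real.exp_nonneg _)
            _ ≤ 2 + 32 * t := hkey
      _ = (2 + 32 * R / Real.sqrt n)^n := by rw [htdef, mul_div_assoc]
end
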